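/- For every integer d ≥ 2, every n ∈ ℕ and every j ∈ ℤ, the coefficients of the Laurent polynomial w_{d,n} satisfy ((d−1)n+2+(d+1)j)·(w_{d,n}, t^{−j}) = ((d−1)n+2−(d+1)j)·(w_{d,n}, t^{j}). -/

import Mathlib

open LaurentPolynomial PowerSeries

noncomputable def thetaG (f : ℤ →₀ ℚ) : ℤ →₀ ℚ :=
  f.sum fun j a => Finsupp.single j ((j : ℚ) * a)

lemma thetaG_add (f g : ℤ →₀ ℚ) : thetaG (f + g) = thetaG f + thetaG g :=
  Finsupp.sum_add_index' (fun j => by rw [mul_zero, Finsupp.single_zero])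
    (fun j a b => by rw [mul_add, Finsupp.single_add])

noncomputable def theta : ℚ[T;T⁻¹] →+ ℚ[T;T⁻¹] :=
  AddMonoidHom.mk' (fun f => AddMonoidAlgebra.ofCoeff (thetaG f.coeff)) (fun f g => by
    rw [AddMonoidAlgebra.coeff_add, thetaG_add, AddMonoidAlgebra.ofCoeff_add])

lemma theta_single (j : ℤ) (a : ℚ) :
    theta (AddMonoidAlgebra.single j a) = AddMonoidAlgebra.single j ((j : ℚ) * a) := by
  show AddMonoidAlgebra.ofCoeff (thetaG (Finsupp.single j a)) = _
  rw [thetaG, Finsupp.sum_single_index (by rw [mul_zero, Finsupp.single_zero])]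
  rfl

lemma theta_C_mul_T (n : ℤ) (a : ℚ) :
    theta (LaurentPolynomial.C a * T n) = LaurentPolynomial.C ((n : ℚ) * a) * T n := by
  rw [← single_eq_C_mul_T, ← single_eq_C_mul_T, theta_single]

lemma theta_apply (f : ℚ[T;T⁻¹]) (j : ℤ) : (theta f).coeff j = (j : ℚ) * f.coeff j := by
  induction f using LaurentPolynomial.induction_on' with
  | add p q hp hq => rw [map_add, AddMonoidAlgebra.coeff_add, AddMonoidAlgebra.coeff_add, Finsupp.add_apply, Finsupp.add_apply, hp, hq]; ring
  | C_mul_T n a =>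
      rw [theta_C_mul_T, ← single_eq_C_mul_T, ← single_eq_C_mul_T, AddMonoidAlgebra.coeff_single, AddMonoidAlgebra.coeff_single,
        Finsupp.single_apply, Finsupp.single_apply]
      split <;> simp_all

lemma theta_mul (f g : ℚ[T;T⁻¹]) : theta (f * g) = theta f * g + f * theta g := by
  induction f using LaurentPolynomial.induction_on' with
  | add p q hp hq => rw [add_mul, map_add, map_add, hp, hq]; ring
  | C_mul_T n a =>
    induction g using LaurentPolynomial.induction_on' with
    | add p q hp hq => rw [mul_add, map_add, map_add, hp, hq]; ring
    | C_mul_T m b =>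
        have key : (LaurentPolynomial.C a * T n) * (LaurentPolynomial.C b * T m) = LaurentPolynomial.C (a * b) * T (n + m) := by
          rw [T_add, map_mul]; ring
        rw [key, theta_C_mul_T, theta_C_mul_T, theta_C_mul_T]
        have : ((n + m : ℤ) : ℚ) * (a * b) = ((n:ℚ) * a) * b + a * ((m:ℚ) * b) := by
          push_cast; ring
        rw [this, map_add, add_mul, T_add, map_mul, map_mul, map_mul]
        ring

lemma theta_one : theta 1 = 0 := by
  have := theta_C_mul_T 0 1
  simpa using this

lemma theta_T_one : theta (T 1) = T 1 := by
  have := theta_C_mul_T 1 1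
  simpa using this

lemma theta_T_negone : theta (T (-1)) = -(T (-1)) := by
  have := theta_C_mul_T (-1) 1
  simp only [mul_one, map_one, one_mul, Int.cast_neg, Int.cast_one] at this
  rw [this, map_neg, map_one]; ring

lemma coeff_pow_tuple {R : Type*} [CommSemiring R] (φ : PowerSeries R) (k n : ℕ) :
    PowerSeries.coeff n (φ ^ k)
      = ∑ l ∈ Finset.Nat.antidiagonalTuple k n, ∏ i : Fin k, PowerSeries.coeff (l i) φ := by
  induction k generalizing n with
  | zero =>
      cases n with
      | zero => simp [Finset.Nat.antidiagonalTuple_zero_zero]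
      | succ n => simp [Finset.Nat.antidiagonalTuple_zero_succ, coeff_one]
  | succ k ih =>
      rw [pow_succ', coeff_mul]
      have : ∀ p : ℕ × ℕ, PowerSeries.coeff p.1 φ * PowerSeries.coeff p.2 (φ ^ k)
          = ∑ l ∈ Finset.Nat.antidiagonalTuple k p.2,
              ∏ i : Fin (k+1), PowerSeries.coeff ((Fin.cons p.1 l : Fin (k+1) → ℕ) i) φ := by
        intro p
        rw [ih, Finset.mul_sum]
        refine Finset.sum_congr rfl fun l _ => ?_
        simp [Fin.prod_univ_succ]
      rw [Finset.sum_congr rfl fun p _ => this p]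
      rw [Finset.sum_sigma']
      refine Finset.sum_nbij' (fun x => (Fin.cons x.1.1 x.2 : Fin (k+1) → ℕ))
        (fun x => ⟨(x 0, ∑ i : Fin k, Fin.tail x i), Fin.tail x⟩) ?_ ?_ ?_ ?_ ?_
      · rintro ⟨⟨a, b⟩, l⟩ hx
        simp only [Finset.mem_sigma, Finset.HasAntidiagonal.mem_antidiagonal,
          Finset.Nat.mem_antidiagonalTuple] at hx ⊢
        rw [Fin.sum_cons, hx.2, hx.1]
      · intro x hx
        simp only [Finset.Nat.mem_antidiagonalTuple] at hx
        simp only [Finset.mem_sigma, Finset.HasAntidiagonal.mem_antidiagonal,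
          Finset.Nat.mem_antidiagonalTuple]
        rw [← hx, Fin.sum_univ_succ]
        exact ⟨rfl, trivial⟩
      · rintro ⟨⟨a, b⟩, l⟩ hx
        simp only [Finset.mem_sigma, Finset.HasAntidiagonal.mem_antidiagonal,
          Finset.Nat.mem_antidiagonalTuple] at hx
        simp only [Fin.cons_zero, Fin.tail_cons]
        obtain ⟨h1, h2⟩ := hx
        congr 1
        rw [h2]
      · intro x hx
        exact Fin.cons_self_tail x
      · intro x hx
        rfl

noncomputable def Dt (f : PowerSeries ℚ[T;T⁻¹]) : PowerSeries ℚ[T;T⁻¹] :=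
  PowerSeries.mk fun m => theta (PowerSeries.coeff m f)

noncomputable def Dx (f : PowerSeries ℚ[T;T⁻¹]) : PowerSeries ℚ[T;T⁻¹] :=
  PowerSeries.mk fun m => (m : ℚ[T;T⁻¹]) * PowerSeries.coeff m f

lemma coeff_Dt (f : PowerSeries ℚ[T;T⁻¹]) (m : ℕ) :
    PowerSeries.coeff m (Dt f) = theta (PowerSeries.coeff m f) := coeff_mk _ _

lemma coeff_Dx (f : PowerSeries ℚ[T;T⁻¹]) (m : ℕ) :
    PowerSeries.coeff m (Dx f) = (m : ℚ[T;T⁻¹]) * PowerSeries.coeff m f := coeff_mk _ _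

lemma Dt_add (f g : PowerSeries ℚ[T;T⁻¹]) : Dt (f + g) = Dt f + Dt g := by
  ext m : 1; simp [coeff_Dt]

lemma Dx_add (f g : PowerSeries ℚ[T;T⁻¹]) : Dx (f + g) = Dx f + Dx g := by
  refine PowerSeries.ext fun m => ?_
  simp only [map_add, coeff_Dx]
  ring

lemma Dt_one : Dt 1 = 0 := by
  ext m : 1; simp only [coeff_Dt, coeff_one, map_zero]
  split <;> simp [theta_one]

lemma Dx_one : Dx 1 = 0 := by
  ext m : 1; simp only [coeff_Dx, coeff_one, map_zero]
  split <;> simp_all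

lemma Dt_X : Dt X = 0 := by
  ext m : 1; simp only [coeff_Dt, coeff_X, map_zero]
  split <;> simp [show theta 1 = 0 from theta_one]

lemma Dx_X : Dx X = X := by
  ext m : 1; simp only [coeff_Dx, coeff_X]
  split <;> simp_all

lemma Dt_C (r : ℚ[T;T⁻¹]) : Dt (PowerSeries.C r) = PowerSeries.C (theta r) := by
  ext m : 1; simp only [coeff_Dt, PowerSeries.coeff_C, map_zero]
  split <;> simp

lemma Dx_C (r : ℚ[T;T⁻¹]) : Dx (PowerSeries.C r) = 0 := by
  ext m : 1; simp only [coeff_Dx, PowerSeries.coeff_C, map_zero]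
  split <;> simp_all

lemma Dt_mul (f g : PowerSeries ℚ[T;T⁻¹]) : Dt (f * g) = Dt f * g + f * Dt g := by
  refine PowerSeries.ext fun m => ?_
  simp only [map_add, coeff_Dt, coeff_mul, map_sum]
  rw [← Finset.sum_add_distrib]
  exact Finset.sum_congr rfl fun p hp => by rw [theta_mul]

lemma Dx_mul (f g : PowerSeries ℚ[T;T⁻¹]) : Dx (f * g) = Dx f * g + f * Dx g := by
  refine PowerSeries.ext fun m => ?_
  simp only [map_add, coeff_Dx, coeff_mul, Finset.mul_sum]
  rw [← Finset.sum_add_distrib]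
  refine Finset.sum_congr rfl fun p hp => ?_
  rw [Finset.HasAntidiagonal.mem_antidiagonal] at hp
  rw [← hp]
  push_cast
  ring

lemma D_pow (D : PowerSeries ℚ[T;T⁻¹] → PowerSeries ℚ[T;T⁻¹])
    (hD : ∀ f g, D (f * g) = D f * g + f * D g) (g : PowerSeries ℚ[T;T⁻¹]) (m : ℕ) :
    D (g ^ (m + 1)) = ((m : PowerSeries ℚ[T;T⁻¹]) + 1) * g ^ m * D g := by
  induction m with
  | zero => rw [zero_add, pow_one]; push_cast; ring
  | succ m ih =>
      rw [pow_succ, hD, ih]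
      push_cast
      ring

/-- For `d ≥ 2` and the Laurent polynomials `w_{d,n}` defined by
`w_{d,0} = 1` and `w_{d,n+1}(t) = t·∑_{k₁+⋯+k_d = n} ∏ᵢ w_{d,kᵢ}(t⁻¹)`, the coefficients
satisfy `((d−1)n+2+(d+1)j)·(w_{d,n}, t^{−j}) = ((d−1)n+2−(d+1)j)·(w_{d,n}, t^{j})`. -/
theorem stmt16 (d : ℕ) (hd : 2 ≤ d) (w : ℕ → ℚ[T;T⁻¹])
    (hw0 : w 0 = 1)
    (hw : ∀ n : ℕ, w (n + 1) =
      T 1 * ∑ k ∈ Finset.Nat.antidiagonalTuple d n, ∏ i : Fin d, invert (w (k i)))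
    (n : ℕ) (j : ℤ) :
    (((d : ℚ) - 1) * n + 2 + ((d : ℚ) + 1) * (j : ℚ)) * (w n).coeff (-j)
      = (((d : ℚ) - 1) * n + 2 - ((d : ℚ) + 1) * (j : ℚ)) * (w n).coeff j := by
  classical
  set F : PowerSeries ℚ[T;T⁻¹] := PowerSeries.mk fun m => w m with hFdef
  set G : PowerSeries ℚ[T;T⁻¹] := PowerSeries.mk fun m => invert (w m) with hGdef
  obtain ⟨e, rfl⟩ : ∃ e, d = e + 2 := ⟨d - 2, by omega⟩
  set c1 : PowerSeries ℚ[T;T⁻¹] := PowerSeries.C (T 1) with hc1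
  set c2 : PowerSeries ℚ[T;T⁻¹] := PowerSeries.C (T (-1)) with hc2
  -- functional equations
  have hF : F = 1 + X * (c1 * G ^ (e + 2)) := by
    ext m : 1
    cases m with
    | zero =>
        rw [hFdef, coeff_mk, hw0, map_add, coeff_zero_X_mul, coeff_one]
        simp
    | succ m =>
        rw [hFdef, coeff_mk, hw m, map_add, coeff_succ_X_mul, coeff_one, hc1,
          PowerSeries.coeff_C_mul, coeff_pow_tuple]
        simp only [hGdef, coeff_mk, Nat.succ_ne_zero, if_false, zero_add]
  have hG : G = 1 + X * (c2 * F ^ (e + 2)) := by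
    ext m : 1
    cases m with
    | zero =>
        rw [hGdef, coeff_mk, hw0, map_add, coeff_zero_X_mul, coeff_one]
        simp
    | succ m =>
        rw [hGdef, coeff_mk, hw m, map_add, coeff_succ_X_mul, coeff_one, hc2,
          PowerSeries.coeff_C_mul, coeff_pow_tuple]
        simp only [hFdef, coeff_mk, Nat.succ_ne_zero, if_false, zero_add]
        have hinv : ∀ x : ℚ[T;T⁻¹], invert (invert x) = x := fun x => involutive_invert x
        simp only [map_mul, map_sum, map_prod, invert_T, hinv]
  -- derivative relations
  have hDxF : Dx F = X * (c1 * G ^ (e + 2))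
      + (((e : PowerSeries ℚ[T;T⁻¹]) + 2) * (X * (c1 * G ^ (e + 1)))) * Dx G := by
    rw [hF, Dx_add, Dx_one, Dx_mul, Dx_X, Dx_mul, Dx_C,
      D_pow Dx Dx_mul G (e + 1)]
    push_cast
    ring
  have hDxG : Dx G = X * (c2 * F ^ (e + 2))
      + (((e : PowerSeries ℚ[T;T⁻¹]) + 2) * (X * (c2 * F ^ (e + 1)))) * Dx F := by
    rw [hG, Dx_add, Dx_one, Dx_mul, Dx_X, Dx_mul, Dx_C,
      D_pow Dx Dx_mul F (e + 1)]
    push_cast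
    ring
  have hDtF : Dt F = X * (c1 * G ^ (e + 2))
      + (((e : PowerSeries ℚ[T;T⁻¹]) + 2) * (X * (c1 * G ^ (e + 1)))) * Dt G := by
    rw [hF, Dt_add, Dt_one, Dt_mul, Dt_X, Dt_mul, Dt_C, theta_T_one,
      D_pow Dt Dt_mul G (e + 1)]
    push_cast
    ring
  have hDtG : Dt G = -(X * (c2 * F ^ (e + 2)))
      + (((e : PowerSeries ℚ[T;T⁻¹]) + 2) * (X * (c2 * F ^ (e + 1)))) * Dt F := by
    rw [hG, Dt_add, Dt_one, Dt_mul, Dt_X, Dt_mul, Dt_C, theta_T_negone, map_neg,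
      D_pow Dt Dt_mul F (e + 1)]
    push_cast
    ring
  set A : PowerSeries ℚ[T;T⁻¹] := X * (c1 * G ^ (e + 2)) with hA
  set B : PowerSeries ℚ[T;T⁻¹] := X * (c2 * F ^ (e + 2)) with hB
  set u : PowerSeries ℚ[T;T⁻¹] := ((e : PowerSeries ℚ[T;T⁻¹]) + 2) * (X * (c1 * G ^ (e + 1))) with hu
  set v : PowerSeries ℚ[T;T⁻¹] := ((e : PowerSeries ℚ[T;T⁻¹]) + 2) * (X * (c2 * F ^ (e + 1))) with hv
  have e1 : (1 - u * v) * Dx F = A + u * B := by linear_combination hDxF + u * hDxG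
  have e2 : (1 - u * v) * Dx G = B + v * A := by linear_combination hDxG + v * hDxF
  have e3 : (1 - u * v) * Dt F = A - u * B := by linear_combination hDtF + u * hDtG
  have e4 : (1 - u * v) * Dt G = -B + v * A := by linear_combination hDtG + v * hDtF
  have h5 : ((e : PowerSeries ℚ[T;T⁻¹]) + 2) * (v * A - u * B) = u * v * (G - F) := by
    rw [hA, hB, hu, hv]; ring
  set E : PowerSeries ℚ[T;T⁻¹] := (((e + 2 : ℕ) : PowerSeries ℚ[T;T⁻¹]) - 1) * (Dx G - Dx F) + 2 * (G - F)
      + (((e + 2 : ℕ) : PowerSeries ℚ[T;T⁻¹]) + 1) * (Dt G + Dt F) with hE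
  have key : (1 - u * v) * E = 0 := by
    rw [hE]
    push_cast
    linear_combination ((e : PowerSeries ℚ[T;T⁻¹]) + 1) * e2 - ((e : PowerSeries ℚ[T;T⁻¹]) + 1) * e1 + ((e : PowerSeries ℚ[T;T⁻¹]) + 3) * e3
      + ((e : PowerSeries ℚ[T;T⁻¹]) + 3) * e4 + 2 * hG - 2 * hF + 2 * h5
  have hne : (1 : PowerSeries ℚ[T;T⁻¹]) - u * v ≠ 0 := by
    intro h
    have h0 := congrArg (PowerSeries.constantCoeff) h
    rw [map_sub, map_one, map_zero, hu, hv] at h0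
    simp only [map_mul, constantCoeff_X, mul_zero, zero_mul, map_add] at h0
    simp at h0
  have hE0 : E = 0 := by
    rcases mul_eq_zero.mp key with h | h
    · exact absurd h hne
    · exact h
  -- extract coefficient n
  have hn := congrArg (PowerSeries.coeff n) hE0
  rw [hE] at hn
  have hcast1 : (((e + 2 : ℕ) : PowerSeries ℚ[T;T⁻¹]) - 1) = PowerSeries.C (((e + 2 : ℕ) : ℚ[T;T⁻¹]) - 1) := by
    rw [map_sub, map_natCast, map_one]
  have hcast2 : (((e + 2 : ℕ) : PowerSeries ℚ[T;T⁻¹]) + 1) = PowerSeries.C (((e + 2 : ℕ) : ℚ[T;T⁻¹]) + 1) := by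
    rw [map_add, map_natCast, map_one]
  have hcast3 : (2 : PowerSeries ℚ[T;T⁻¹]) = PowerSeries.C (2 : ℚ[T;T⁻¹]) := by
    have h := map_natCast (PowerSeries.C (R := ℚ[T;T⁻¹])) 2
    norm_num at h
    exact h.symm
  rw [hcast1, hcast2, hcast3] at hn
  rw [map_add, map_add, map_zero, PowerSeries.coeff_C_mul, PowerSeries.coeff_C_mul,
    PowerSeries.coeff_C_mul, map_sub, map_sub, map_add, coeff_Dx, coeff_Dx,
    coeff_Dt, coeff_Dt, hFdef, hGdef, coeff_mk, coeff_mk] at hn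
  -- now hn is an identity in ℚ[T;T⁻¹]; evaluate at j
  have hj := congrArg (fun p : ℚ[T;T⁻¹] => p.coeff j) hn
  have happC : ∀ (a : ℚ) (f : ℚ[T;T⁻¹]) (x : ℤ), (LaurentPolynomial.C a * f).coeff x = a * f.coeff x := fun a f x => by
    rw [← LaurentPolynomial.smul_eq_C_mul]; rfl
  have hnatC : ∀ m : ℕ, ((m : ℚ[T;T⁻¹])) = LaurentPolynomial.C ((m : ℚ)) := fun m => by
    rw [map_natCast]
  have hcast1' : (((e + 2 : ℕ) : ℚ[T;T⁻¹]) - 1) = LaurentPolynomial.C (((e + 2 : ℕ) : ℚ) - 1) := by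
    rw [map_sub, map_natCast, map_one]
  have hcast2' : (((e + 2 : ℕ) : ℚ[T;T⁻¹]) + 1) = LaurentPolynomial.C (((e + 2 : ℕ) : ℚ) + 1) := by
    rw [map_add, map_natCast, map_one]
  have hcast3' : (2 : ℚ[T;T⁻¹]) = LaurentPolynomial.C (2 : ℚ) := by
    have h := map_natCast (LaurentPolynomial.C (R := ℚ)) 2
    norm_num at h
    exact h.symm
  rw [hcast1', hcast2', hcast3', hnatC n] at hj
  have hadd : ∀ (f g : ℚ[T;T⁻¹]) (x : ℤ), (f + g).coeff x = f.coeff x + g.coeff x :=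
    fun f g x => Finsupp.add_apply f.coeff g.coeff x
  have hsub : ∀ (f g : ℚ[T;T⁻¹]) (x : ℤ), (f - g).coeff x = f.coeff x - g.coeff x :=
    fun f g x => Finsupp.sub_apply f.coeff g.coeff x
  have hzero : ∀ x : ℤ, (0 : ℚ[T;T⁻¹]).coeff x = 0 := fun x => rfl
  simp only [hadd, hsub, hzero, happC, theta_apply, invert_apply] at hj
  push_cast at hj ⊢
  linear_combination hj
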